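/- First-order condition for the population quantile regression coefficient: if θ* minimizes θ ↦ E[ρ_τ(Y − ⟨Z, θ⟩)] over ℝ^k, E‖Z‖₂ < ∞, and the conditional distribution of Y given Z is continuous (so that P(Y = ⟨Z,θ*⟩) = 0), then E[Z·φ_τ(Y − ⟨Z, θ*⟩)] = 0. -/

import Mathlib

open MeasureTheory Matrix

/-- The check loss `ρ_τ(u) = u (τ - 1{u < 0})`. -/
noncomputable def checkLoss (τ u : ℝ) : ℝ := u * (τ - if u < 0 then 1 else 0)

/-- The score `φ_τ(u) = τ - 1{u < 0}`. -/
noncomputable def score (τ u : ℝ) : ℝ := τ - if u < 0 then 1 else 0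

lemma checkLoss_eq (τ u : ℝ) : checkLoss τ u = τ * u - min u 0 := by
  unfold checkLoss
  rcases lt_or_ge u 0 with h | h
  · rw [if_pos h, min_eq_left h.le]; ring
  · rw [if_neg (not_lt.mpr h), min_eq_right h]; ring

lemma checkLoss_lip {τ : ℝ} (hτ0 : 0 ≤ τ) (hτ1 : τ ≤ 1) (u v : ℝ) :
    |checkLoss τ u - checkLoss τ v| ≤ 2 * |u - v| := by
  rw [checkLoss_eq, checkLoss_eq]
  have h1 : |min u 0 - min v 0| ≤ |u - v| := by
    have := abs_min_sub_min_le_max u 0 v 0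
    simpa using this.trans (by simp [abs_nonneg])
  have h2 : |τ * u - τ * v| ≤ |u - v| := by
    rw [← mul_sub, abs_mul, abs_of_nonneg hτ0]
    nlinarith [abs_nonneg (u - v)]
  calc |τ * u - min u 0 - (τ * v - min v 0)|
      = |(τ * u - τ * v) - (min u 0 - min v 0)| := by ring_nf
    _ ≤ |τ * u - τ * v| + |min u 0 - min v 0| := abs_sub _ _
    _ ≤ 2 * |u - v| := by linarith

lemma measurable_checkLoss (τ : ℝ) : Measurable (checkLoss τ) := by
  unfold checkLoss
  exact measurable_id.mul (measurable_const.sub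
    (Measurable.ite (measurableSet_lt measurable_id measurable_const)
      measurable_const measurable_const))

lemma hasDerivAt_checkLoss {τ c : ℝ} (hc : c ≠ 0) (a : ℝ) :
    HasDerivAt (fun t : ℝ => checkLoss τ (c - t * a)) (-(a * score τ c)) 0 := by
  have cont : Continuous fun t : ℝ => c - t * a :=
    continuous_const.sub (continuous_id.mul continuous_const)
  rcases hc.lt_or_gt with hneg | hpos
  · -- c < 0 : locally checkLoss τ (c - t a) = (c - t a) * (τ - 1)
    have hev : ∀ᶠ t in nhds (0 : ℝ), c - t * a < 0 := by
      have : ContinuousAt (fun t : ℝ => c - t * a) 0 := cont.continuousAt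
      have h0 : c - (0 : ℝ) * a < 0 := by simpa using hneg
      exact this.eventually_lt continuousAt_const h0
    have hlin : HasDerivAt (fun t : ℝ => (c - t * a) * (τ - 1)) ((0 - 1 * a) * (τ - 1)) 0 :=
      ((hasDerivAt_const (0 : ℝ) c).sub ((hasDerivAt_id 0).mul_const a)).mul_const (τ - 1)
    have heq : (fun t : ℝ => (c - t * a) * (τ - 1)) =ᶠ[nhds (0:ℝ)]
        fun t => checkLoss τ (c - t * a) := by
      filter_upwards [hev] with t ht
      unfold checkLoss
      rw [if_pos ht]
    have := hlin.congr_of_eventuallyEq heq.symm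
    have hsc : score τ c = τ - 1 := by unfold score; rw [if_pos hneg]
    exact this.congr_deriv (by rw [hsc]; ring)
  · have hev : ∀ᶠ t in nhds (0 : ℝ), 0 < c - t * a := by
      have : ContinuousAt (fun t : ℝ => c - t * a) 0 := cont.continuousAt
      have h0 : (0:ℝ) < c - (0 : ℝ) * a := by simpa using hpos
      exact continuousAt_const.eventually_lt this h0
    have hlin : HasDerivAt (fun t : ℝ => (c - t * a) * τ) ((0 - 1 * a) * τ) 0 :=
      ((hasDerivAt_const (0 : ℝ) c).sub ((hasDerivAt_id 0).mul_const a)).mul_const τ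
    have heq : (fun t : ℝ => (c - t * a) * τ) =ᶠ[nhds (0:ℝ)]
        fun t => checkLoss τ (c - t * a) := by
      filter_upwards [hev] with t ht
      unfold checkLoss
      rw [if_neg (not_lt.mpr ht.le)]
      ring
    have := hlin.congr_of_eventuallyEq heq.symm
    have hsc : score τ c = τ := by unfold score; rw [if_neg (not_lt.mpr hpos.le)]; ring
    exact this.congr_deriv (by rw [hsc]; ring)

/-- First-order condition for the population quantile regression coefficient: if `θ*`
minimizes `θ ↦ E[ρ_τ(Y − ⟨Z,θ⟩) − ρ_τ(Y)]`, `E‖Z‖₂ < ∞`, and `P(Y = ⟨Z,θ*⟩) = 0`,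
then `E[Z φ_τ(Y − ⟨Z,θ*⟩)] = 0`. -/
theorem population_first_order_condition {Ω : Type*} [MeasurableSpace Ω] {k : ℕ}
    (μ : Measure Ω) [IsProbabilityMeasure μ]
    (Y : Ω → ℝ) (Z : Ω → Fin k → ℝ) (hY : Measurable Y) (hZ : Measurable Z)
    (τ : ℝ) (hτ0 : 0 < τ) (hτ1 : τ < 1)
    (hZint : Integrable (fun ω => Real.sqrt (∑ j, (Z ω j)^2)) μ)
    (hρint : ∀ θ : Fin k → ℝ,
      Integrable (fun ω => checkLoss τ (Y ω - Z ω ⬝ᵥ θ) - checkLoss τ (Y ω)) μ)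
    (θs : Fin k → ℝ)
    (hmin : ∀ θ : Fin k → ℝ,
      (∫ ω, (checkLoss τ (Y ω - Z ω ⬝ᵥ θs) - checkLoss τ (Y ω)) ∂μ) ≤
        ∫ ω, (checkLoss τ (Y ω - Z ω ⬝ᵥ θ) - checkLoss τ (Y ω)) ∂μ)
    (hatom : μ {ω | Y ω = Z ω ⬝ᵥ θs} = 0) :
    ∀ j, (∫ ω, Z ω j * score τ (Y ω - Z ω ⬝ᵥ θs) ∂μ) = 0 := by
  intro j
  -- measurability facts
  have hZj : Measurable fun ω => Z ω j := (measurable_pi_apply j).comp hZ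
  have hdot : ∀ θ : Fin k → ℝ, Measurable fun ω => Z ω ⬝ᵥ θ := by
    intro θ
    unfold dotProduct
    exact Finset.measurable_sum _ fun i _ =>
      ((measurable_pi_apply i).comp hZ).mul measurable_const
  -- the parametrized family
  set F : ℝ → Ω → ℝ := fun t ω =>
    checkLoss τ (Y ω - Z ω ⬝ᵥ θs - t * Z ω j) - checkLoss τ (Y ω) with hF
  set F' : Ω → ℝ := fun ω => -(Z ω j * score τ (Y ω - Z ω ⬝ᵥ θs)) with hF'
  have hdotθ : ∀ (t : ℝ) (ω : Ω),
      Z ω ⬝ᵥ (θs + t • (Pi.single j 1 : Fin k → ℝ)) = Z ω ⬝ᵥ θs + t * Z ω j := by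
    intro t ω
    rw [dotProduct_add, dotProduct_smul]
    simp [dotProduct_single]
  have hFint : ∀ t : ℝ, Integrable (F t) μ := by
    intro t
    have := hρint (θs + t • (Pi.single j 1 : Fin k → ℝ))
    refine this.congr (ae_of_all _ fun ω => ?_)
    simp only [hdotθ t ω, hF, sub_sub]
  have hFmeas : ∀ t : ℝ, AEStronglyMeasurable (F t) μ := fun t => (hFint t).aestronglyMeasurable
  -- bound integrable
  have hZjint : Integrable (fun ω => 2 * |Z ω j|) μ := by
    have h1 : Integrable (fun ω => |Z ω j|) μ := by
      refine hZint.mono (hZj.abs.aestronglyMeasurable) (ae_of_all _ fun ω => ?_)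
      rw [Real.norm_eq_abs, abs_abs, Real.norm_eq_abs,
        abs_of_nonneg (Real.sqrt_nonneg _)]
      have : (Z ω j) ^ 2 ≤ ∑ i, (Z ω i) ^ 2 :=
        Finset.single_le_sum (f := fun i => (Z ω i)^2) (fun i _ => sq_nonneg _) (Finset.mem_univ j)
      calc |Z ω j| = Real.sqrt ((Z ω j) ^ 2) := by rw [Real.sqrt_sq_eq_abs]
        _ ≤ Real.sqrt (∑ i, (Z ω i) ^ 2) := Real.sqrt_le_sqrt this
    exact h1.const_mul 2
  -- a.e. Lipschitz in t
  have hlip : ∀ᵐ ω ∂μ, LipschitzOnWith (Real.nnabs (2 * |Z ω j|))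
      (fun t => F t ω) (Metric.ball (0:ℝ) 1) := by
    refine ae_of_all _ fun ω => ?_
    have : LipschitzWith (Real.nnabs (2 * |Z ω j|)) (fun t => F t ω) := by
      refine LipschitzWith.of_dist_le_mul fun s t => ?_
      simp only [hF, Real.dist_eq]
      have h1 : checkLoss τ (Y ω - Z ω ⬝ᵥ θs - s * Z ω j) - checkLoss τ (Y ω) -
          (checkLoss τ (Y ω - Z ω ⬝ᵥ θs - t * Z ω j) - checkLoss τ (Y ω)) =
          checkLoss τ (Y ω - Z ω ⬝ᵥ θs - s * Z ω j) -
          checkLoss τ (Y ω - Z ω ⬝ᵥ θs - t * Z ω j) := by ring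
      rw [h1]
      have h2 := checkLoss_lip hτ0.le hτ1.le
        (Y ω - Z ω ⬝ᵥ θs - s * Z ω j) (Y ω - Z ω ⬝ᵥ θs - t * Z ω j)
      have h3 : (Y ω - Z ω ⬝ᵥ θs - s * Z ω j) - (Y ω - Z ω ⬝ᵥ θs - t * Z ω j)
          = -(Z ω j) * (s - t) := by ring
      rw [h3, abs_mul, abs_neg] at h2
      have h4 : (Real.nnabs (2 * |Z ω j|) : ℝ) = 2 * |Z ω j| := by
        simp [Real.coe_nnabs, abs_of_nonneg, abs_nonneg]
      rw [h4]
      calc _ ≤ 2 * (|Z ω j| * |s - t|) := h2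
        _ = 2 * |Z ω j| * |s - t| := by ring
    exact this.lipschitzOnWith
  -- a.e. derivative
  have hderiv : ∀ᵐ ω ∂μ, HasDerivAt (fun t => F t ω) (F' ω) 0 := by
    have hae : ∀ᵐ ω ∂μ, Y ω ≠ Z ω ⬝ᵥ θs := by
      rw [ae_iff]
      simpa using hatom
    filter_upwards [hae] with ω hω
    have hc : Y ω - Z ω ⬝ᵥ θs ≠ 0 := sub_ne_zero.mpr hω
    have := (hasDerivAt_checkLoss (τ := τ) hc (Z ω j)).sub_const (checkLoss τ (Y ω))
    simpa [hF, hF', sub_sub] using this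
  -- F' measurable
  have hF'meas : AEStronglyMeasurable F' μ := by
    apply Measurable.aestronglyMeasurable
    apply Measurable.neg
    apply hZj.mul
    unfold score
    exact measurable_const.sub
      (Measurable.ite (measurableSet_lt (hY.sub (hdot θs)) measurable_const)
        measurable_const measurable_const)
  have key := hasDerivAt_integral_of_dominated_loc_of_lip (F := F) (F' := F') (x₀ := (0:ℝ))
    (bound := fun ω => 2 * |Z ω j|) (Metric.ball_mem_nhds 0 one_pos)
    (Filter.Eventually.of_forall hFmeas) (hFint 0) hF'meas hlip hZjint hderiv
  -- 0 is a global minimum of g(t) := ∫ F t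
  have hmin' : IsLocalMin (fun t => ∫ ω, F t ω ∂μ) 0 := by
    apply Filter.Eventually.of_forall
    intro t
    have h1 := hmin (θs + t • (Pi.single j 1 : Fin k → ℝ))
    have h2 : (∫ ω, F t ω ∂μ) =
        ∫ ω, (checkLoss τ (Y ω - Z ω ⬝ᵥ (θs + t • (Pi.single j 1 : Fin k → ℝ))) - checkLoss τ (Y ω)) ∂μ := by
      apply integral_congr_ae
      refine ae_of_all _ fun ω => ?_
      simp only [hdotθ t ω, hF, sub_sub]
    have h0 : (∫ ω, F 0 ω ∂μ) =
        ∫ ω, (checkLoss τ (Y ω - Z ω ⬝ᵥ θs) - checkLoss τ (Y ω)) ∂μ := by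
      apply integral_congr_ae
      refine ae_of_all _ fun ω => ?_
      simp [hF]
    simp only [h2, h0]
    exact h1
  have hzero : (∫ ω, F' ω ∂μ) = 0 := hmin'.hasDerivAt_eq_zero key.2
  have : (∫ ω, F' ω ∂μ) = -∫ ω, Z ω j * score τ (Y ω - Z ω ⬝ᵥ θs) ∂μ := by
    rw [← integral_neg]
  rw [this] at hzero
  linarith
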